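/- arXiv:1003.3627 — 4 statements merged into one kernel-verified Lean document; each statement's English description precedes it below -/
import Mathlib

section
/- Suppose φ ↦ ν_φ assigns to each φ ∈ C a finite signed measure ν_φ on [−r,0] such that (i) ‖ν_φ‖_{TV} ≤ M_{Vg} for all φ ∈ C, and (ii) ‖ν_φ − ν_ψ‖_{TV} ≤ L_{Vg} ‖φ − ψ‖_C for all φ, ψ ∈ C. Let b : ℝ → ℝ be Lipschitz with constant L_b and bounded with |b(s)| ≤ M_b for all s. Then the map F_c : C → L²(Ω), F_c(φ)(x) := ∫_{[−r,0]} ( ∫_Ω b(φ(θ)(y)) f(x−y) dy ) dν_φ(θ), is globally Lipschitz: ‖F_c(φ) − F_c(ψ)‖_{L²(Ω)} ≤ M_f |Ω| ( L_b M_{Vg} + M_b |Ω|^{1/2} L_{Vg} ) ‖φ − ψ‖_C for all φ, ψ ∈ C. -/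
open MeasureTheory Set Filter Topology

/-- Integral of a real function against a (finite) signed measure, defined via the
Jordan decomposition: `∫ g dν := ∫ g dν⁺ − ∫ g dν⁻`. -/
noncomputable def sintegral {α : Type*} [MeasurableSpace α]
    (ν : MeasureTheory.SignedMeasure α) (g : α → ℝ) : ℝ :=
  ∫ a, g a ∂ν.toJordanDecomposition.posPart - ∫ a, g a ∂ν.toJordanDecomposition.negPart

/-- Total variation norm `‖ν‖_{TV}` of a signed measure. -/
noncomputable def tvNorm {α : Type*} [MeasurableSpace α]
    (ν : MeasureTheory.SignedMeasure α) : ℝ :=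
  (ν.totalVariation Set.univ).toReal

section helpers

set_option linter.unusedSectionVars false

lemma abs_sintegral_le {α : Type*} [MeasurableSpace α] (ν : SignedMeasure α)
    (g : α → ℝ) (K : ℝ) (hg : ∀ a, |g a| ≤ K) :
    |sintegral ν g| ≤ K * tvNorm ν := by
  have h1 : ‖∫ a, g a ∂ν.toJordanDecomposition.posPart‖
      ≤ K * (ν.toJordanDecomposition.posPart Set.univ).toReal :=
    norm_integral_le_of_norm_le_const (ae_of_all _ fun a => by simpa using hg a)
  have h2 : ‖∫ a, g a ∂ν.toJordanDecomposition.negPart‖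
      ≤ K * (ν.toJordanDecomposition.negPart Set.univ).toReal :=
    norm_integral_le_of_norm_le_const (ae_of_all _ fun a => by simpa using hg a)
  rw [Real.norm_eq_abs] at h1 h2
  have htv : tvNorm ν = (ν.toJordanDecomposition.posPart Set.univ).toReal
      + (ν.toJordanDecomposition.negPart Set.univ).toReal := by
    simp [tvNorm, SignedMeasure.totalVariation, Measure.add_apply,
      ENNReal.toReal_add (measure_ne_top _ _) (measure_ne_top _ _)]
  rw [htv, sintegral]
  calc |∫ a, g a ∂ν.toJordanDecomposition.posPart - ∫ a, g a ∂ν.toJordanDecomposition.negPart|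
      ≤ |∫ a, g a ∂ν.toJordanDecomposition.posPart| +
        |∫ a, g a ∂ν.toJordanDecomposition.negPart| := abs_sub _ _
    _ ≤ _ := by linarith [h1, h2]

lemma signed_apply_eq {α : Type*} [MeasurableSpace α] (ν : SignedMeasure α)
    {s : Set α} (hs : MeasurableSet s) :
    ν s = (ν.toJordanDecomposition.posPart s).toReal
      - (ν.toJordanDecomposition.negPart s).toReal := by
  conv_lhs => rw [← ν.toSignedMeasure_toJordanDecomposition]
  rw [JordanDecomposition.toSignedMeasure, Measure.toSignedMeasure_sub_apply hs]
  simp [Measure.real]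

lemma integrable_of_bdd_meas {α : Type*} [MeasurableSpace α] {μ : Measure α}
    [IsFiniteMeasure μ] {g : α → ℝ} (hg : Measurable g) {K : ℝ} (hK : ∀ a, |g a| ≤ K) :
    Integrable g μ :=
  (integrable_const K).mono' hg.aestronglyMeasurable (ae_of_all _ fun a => by simpa using hK a)

lemma sintegral_sub_measure {α : Type*} [MeasurableSpace α] (ν₁ ν₂ : SignedMeasure α)
    (g : α → ℝ) (hg : Measurable g) (K : ℝ) (hK : ∀ a, |g a| ≤ K) :
    sintegral ν₁ g - sintegral ν₂ g = sintegral (ν₁ - ν₂) g := by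
  set ν₃ := ν₁ - ν₂ with hν₃
  set p₁ := ν₁.toJordanDecomposition.posPart
  set n₁ := ν₁.toJordanDecomposition.negPart
  set p₂ := ν₂.toJordanDecomposition.posPart
  set n₂ := ν₂.toJordanDecomposition.negPart
  set p₃ := ν₃.toJordanDecomposition.posPart
  set n₃ := ν₃.toJordanDecomposition.negPart
  have hmeq : p₁ + n₃ + n₂ = p₃ + p₂ + n₁ := by
    ext s hs
    have e1 := signed_apply_eq ν₁ hs
    have e2 := signed_apply_eq ν₂ hs
    have e3 := signed_apply_eq ν₃ hs
    have e4 : ν₃ s = ν₁ s - ν₂ s := VectorMeasure.sub_apply _ _ _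
    have hreal : (p₁ s).toReal + (n₃ s).toReal + (n₂ s).toReal
        = (p₃ s).toReal + (p₂ s).toReal + (n₁ s).toReal := by
      rw [e1, e2] at e4; rw [e3] at e4; linarith
    simp only [Measure.add_apply]
    rw [← ENNReal.toReal_eq_toReal_iff' (by finiteness) (by finiteness)]
    rw [ENNReal.toReal_add (by finiteness) (by finiteness),
      ENNReal.toReal_add (by finiteness) (by finiteness),
      ENNReal.toReal_add (by finiteness) (by finiteness),
      ENNReal.toReal_add (by finiteness) (by finiteness)]
    linarith
  have hint : ∀ (μ : Measure α) [IsFiniteMeasure μ], Integrable g μ :=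
    fun μ _ => integrable_of_bdd_meas hg hK
  have hInt : ∫ a, g a ∂(p₁ + n₃ + n₂) = ∫ a, g a ∂(p₃ + p₂ + n₁) := by rw [hmeq]
  rw [integral_add_measure ((hint p₁).add_measure (hint n₃)) (hint n₂),
    integral_add_measure (hint p₁) (hint n₃),
    integral_add_measure ((hint p₃).add_measure (hint p₂)) (hint n₁),
    integral_add_measure (hint p₃) (hint p₂)] at hInt
  simp only [sintegral]
  linarith

lemma sintegral_sub_fun {α : Type*} [MeasurableSpace α] (ν : SignedMeasure α)
    (g₁ g₂ : α → ℝ) (hg₁ : Measurable g₁) (hg₂ : Measurable g₂)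
    (K₁ K₂ : ℝ) (hK₁ : ∀ a, |g₁ a| ≤ K₁) (hK₂ : ∀ a, |g₂ a| ≤ K₂) :
    sintegral ν (fun a => g₁ a - g₂ a) = sintegral ν g₁ - sintegral ν g₂ := by
  simp only [sintegral]
  rw [integral_sub (integrable_of_bdd_meas hg₁ hK₁) (integrable_of_bdd_meas hg₂ hK₂),
    integral_sub (integrable_of_bdd_meas hg₁ hK₁) (integrable_of_bdd_meas hg₂ hK₂)]
  ring

lemma integral_abs_lp_le {α : Type*} [MeasurableSpace α] {μ : Measure α}
    [IsFiniteMeasure μ] (w : Lp ℝ 2 μ) :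
    ∫ a, |w a| ∂μ ≤ (μ Set.univ).toReal ^ ((1:ℝ)/2) * ‖w‖ := by
  have hmem : MemLp (w : α → ℝ) 2 μ := Lp.memLp w
  have hint : Integrable (w : α → ℝ) μ := hmem.integrable one_le_two
  have h1 : ∫ a, |w a| ∂μ = (eLpNorm (w : α → ℝ) 1 μ).toReal := by
    rw [eLpNorm_one_eq_lintegral_enorm]
    rw [← integral_norm_eq_lintegral_enorm hint.aestronglyMeasurable]
    simp [Real.norm_eq_abs]
  have h2 : eLpNorm (w : α → ℝ) 1 μ ≤ eLpNorm (w : α → ℝ) 2 μ * μ Set.univ ^ ((1:ℝ)/2) := by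
    have := eLpNorm_le_eLpNorm_mul_rpow_measure_univ (p := 1) (q := 2)
      (by norm_num) hmem.aestronglyMeasurable (μ := μ)
    convert this using 2
    norm_num
  have hfin : eLpNorm (w : α → ℝ) 2 μ * μ Set.univ ^ ((1:ℝ)/2) ≠ ⊤ := by
    apply ENNReal.mul_ne_top (Lp.eLpNorm_ne_top w)
    exact ENNReal.rpow_ne_top_of_nonneg (by norm_num) (measure_ne_top μ _)
  rw [h1]
  calc (eLpNorm (w : α → ℝ) 1 μ).toReal
      ≤ (eLpNorm (w : α → ℝ) 2 μ * μ Set.univ ^ ((1:ℝ)/2)).toReal :=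
        ENNReal.toReal_mono hfin h2
    _ = (μ Set.univ).toReal ^ ((1:ℝ)/2) * ‖w‖ := by
        rw [ENNReal.toReal_mul, Lp.norm_def, ← ENNReal.toReal_rpow]
        ring

section key
variable {α : Type*} [MeasurableSpace α] {μ : Measure α} [IsFiniteMeasure μ]
  {b : ℝ → ℝ} {Lb Mb : ℝ} (hLb : 0 ≤ Lb)
  (hblip : ∀ s t : ℝ, |b s - b t| ≤ Lb * |s - t|) (hbbdd : ∀ s : ℝ, |b s| ≤ Mb)
  {F : α → ℝ} (hF : Measurable F) {Mf : ℝ} (hMf : ∀ a, |F a| ≤ Mf)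

include hLb hblip hbbdd hF hMf

lemma bcont : Continuous b := by
  have : LipschitzWith ⟨Lb, hLb⟩ b :=
    LipschitzWith.of_dist_le_mul fun s t => by
      rw [Real.dist_eq, Real.dist_eq]; exact hblip s t
  exact this.continuous

lemma key_integrable (u : Lp ℝ 2 μ) : Integrable (fun a => b (u a) * F a) μ := by
  have hm : AEStronglyMeasurable (fun a => b (u a) * F a) μ :=
    ((bcont hLb hblip hbbdd hF hMf).comp_aestronglyMeasurable
      (Lp.aestronglyMeasurable u)).mul hF.aestronglyMeasurable
  refine (integrable_const (Mb * Mf)).mono' hm (ae_of_all _ fun a => ?_)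
  have h0 : (0:ℝ) ≤ Mf := le_trans (abs_nonneg _) (hMf a)
  calc ‖b (u a) * F a‖ = |b (u a)| * |F a| := by rw [norm_mul]; rfl
    _ ≤ Mb * Mf := mul_le_mul (hbbdd _) (hMf a) (abs_nonneg _)
        (le_trans (abs_nonneg _) (hbbdd 0))

lemma key_bdd (u : Lp ℝ 2 μ) :
    |∫ a, b (u a) * F a ∂μ| ≤ Mb * Mf * (μ Set.univ).toReal := by
  have := norm_integral_le_of_norm_le_const (μ := μ) (f := fun a => b (u a) * F a)
    (C := Mb * Mf) (ae_of_all _ fun a => by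
      calc ‖b (u a) * F a‖ = |b (u a)| * |F a| := by rw [norm_mul]; rfl
        _ ≤ Mb * Mf := mul_le_mul (hbbdd _) (hMf a) (abs_nonneg _)
            (le_trans (abs_nonneg _) (hbbdd 0)))
  simpa [Measure.real] using this

lemma key_lip (hMf0 : 0 ≤ Mf) (u v : Lp ℝ 2 μ) :
    |(∫ a, b (u a) * F a ∂μ) - ∫ a, b (v a) * F a ∂μ|
      ≤ Mf * Lb * (μ Set.univ).toReal ^ ((1:ℝ)/2) * ‖u - v‖ := by
  have hiu := key_integrable hLb hblip hbbdd hF hMf u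
  have hiv := key_integrable hLb hblip hbbdd hF hMf v
  rw [← integral_sub hiu hiv]
  set w : Lp ℝ 2 μ := u - v with hw
  have hwint : Integrable (fun a => (w : α → ℝ) a) μ := (Lp.memLp w).integrable one_le_two
  have habs : Integrable (fun a => Mf * Lb * |(w : α → ℝ) a|) μ := hwint.abs.const_mul _
  have hae : ∀ᵐ a ∂μ, ‖b (u a) * F a - b (v a) * F a‖ ≤ Mf * Lb * |(w : α → ℝ) a| := by
    filter_upwards [Lp.coeFn_sub u v] with a ha
    have : b (u a) * F a - b (v a) * F a = (b (u a) - b (v a)) * F a := by ring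
    rw [this, ← hw] at *
    rw [ha]
    calc ‖(b (u a) - b (v a)) * F a‖ = |b (u a) - b (v a)| * |F a| := by
          rw [norm_mul]; rfl
      _ ≤ (Lb * |u a - v a|) * Mf :=
          mul_le_mul (hblip _ _) (hMf a) (abs_nonneg _)
            (mul_nonneg hLb (abs_nonneg _))
      _ = Mf * Lb * |u a - v a| := by ring
      _ = Mf * Lb * |(⇑u - ⇑v) a| := rfl
  calc |∫ a, (b (u a) * F a - b (v a) * F a) ∂μ|
      ≤ ∫ a, ‖b (u a) * F a - b (v a) * F a‖ ∂μ := by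
        simpa using norm_integral_le_integral_norm
          (fun a => b (u a) * F a - b (v a) * F a) (μ := μ)
    _ ≤ ∫ a, Mf * Lb * |(w : α → ℝ) a| ∂μ :=
        integral_mono_ae (hiu.sub hiv).norm habs hae
    _ = Mf * Lb * ∫ a, |(w : α → ℝ) a| ∂μ := integral_const_mul _ _
    _ ≤ Mf * Lb * ((μ Set.univ).toReal ^ ((1:ℝ)/2) * ‖w‖) :=
        mul_le_mul_of_nonneg_left (integral_abs_lp_le w) (mul_nonneg hMf0 hLb)
    _ = Mf * Lb * (μ Set.univ).toReal ^ ((1:ℝ)/2) * ‖u - v‖ := by rw [hw]; ring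

end key

end helpers

set_option maxHeartbeats 1000000 in
/-- If `φ ↦ ν_φ` assigns to each `φ ∈ C` a finite signed measure on `[−r,0]`
with `‖ν_φ‖_{TV} ≤ M_{Vg}` and `‖ν_φ − ν_ψ‖_{TV} ≤ L_{Vg}‖φ − ψ‖_C`, and `b` is Lipschitz
with constant `L_b` and bounded by `M_b`, then
`F_c(φ)(x) = ∫_{[−r,0]} (∫_Ω b(φ(θ)(y)) f(x−y) dy) dν_φ(θ)` is globally Lipschitz:
`‖F_c(φ) − F_c(ψ)‖_{L²} ≤ M_f |Ω| (L_b M_{Vg} + M_b |Ω|^{1/2} L_{Vg}) ‖φ − ψ‖_C`. -/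
theorem stmt4
    {n₀ : ℕ} (Ω : Set (EuclideanSpace ℝ (Fin n₀)))
    (hΩmeas : MeasurableSet Ω) (hΩbdd : Bornology.IsBounded Ω)
    (hΩpos : 0 < volume Ω)
    (r : ℝ) (hr : 0 < r)
    (f : EuclideanSpace ℝ (Fin n₀) → ℝ) (hf : Measurable f)
    (Mf : ℝ) (hMf : ∀ z, |f z| ≤ Mf)
    (ν : C(Set.Icc (-r) (0:ℝ), Lp ℝ 2 (volume.restrict Ω)) →
      MeasureTheory.SignedMeasure (Set.Icc (-r) (0:ℝ)))
    (MVg : ℝ) (hMVg : ∀ φ, tvNorm (ν φ) ≤ MVg)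
    (LVg : ℝ) (hLVg : ∀ φ ψ, tvNorm (ν φ - ν ψ) ≤ LVg * ‖φ - ψ‖)
    (b : ℝ → ℝ) (Lb : ℝ) (hLb : 0 ≤ Lb)
    (hblip : ∀ s t : ℝ, |b s - b t| ≤ Lb * |s - t|)
    (Mb : ℝ) (hbbdd : ∀ s : ℝ, |b s| ≤ Mb)
    (φ ψ : C(Set.Icc (-r) (0:ℝ), Lp ℝ 2 (volume.restrict Ω))) :
    eLpNorm (fun x =>
        sintegral (ν φ) (fun θ => ∫ y in Ω, b (φ θ y) * f (x - y)) -
        sintegral (ν ψ) (fun θ => ∫ y in Ω, b (ψ θ y) * f (x - y)))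
        2 (volume.restrict Ω)
      ≤ ENNReal.ofReal (Mf * (volume Ω).toReal *
          (Lb * MVg + Mb * (volume Ω).toReal ^ ((1:ℝ)/2) * LVg) * ‖φ - ψ‖) := by
  have hΩfin : volume Ω ≠ ⊤ := hΩbdd.measure_lt_top.ne
  haveI : IsFiniteMeasure (volume.restrict Ω) :=
    ⟨by rw [Measure.restrict_apply_univ]; exact hΩbdd.measure_lt_top⟩
  set t := (volume Ω).toReal with ht
  have htpos : 0 < t := ENNReal.toReal_pos hΩpos.ne' hΩfin
  have htμ : ((volume.restrict Ω) Set.univ).toReal = t := by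
    rw [Measure.restrict_apply_univ]
  have hMf0 : 0 ≤ Mf := le_trans (abs_nonneg _) (hMf 0)
  have hMb0 : 0 ≤ Mb := le_trans (abs_nonneg _) (hbbdd 0)
  set n := ‖φ - ψ‖ with hn
  have hn0 : 0 ≤ n := norm_nonneg _
  have hMVg0 : 0 ≤ MVg := le_trans ENNReal.toReal_nonneg (hMVg φ)
  have hLVgn0 : 0 ≤ LVg * n := le_trans ENNReal.toReal_nonneg (hLVg φ ψ)
  set ts := t ^ ((1:ℝ)/2) with hts
  have hts0 : 0 ≤ ts := Real.rpow_nonneg htpos.le _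
  have htsts : ts * ts = t := by
    rw [hts, ← Real.rpow_add htpos]
    norm_num
  set C : ℝ := Mf * Lb * ts * n * MVg + Mb * Mf * t * (LVg * n) with hC
  -- pointwise bound
  have hpt : ∀ x : EuclideanSpace ℝ (Fin n₀),
      |sintegral (ν φ) (fun θ => ∫ y in Ω, b (φ θ y) * f (x - y)) -
        sintegral (ν ψ) (fun θ => ∫ y in Ω, b (ψ θ y) * f (x - y))| ≤ C := by
    intro x
    have hFmeas : Measurable (fun y : EuclideanSpace ℝ (Fin n₀) => f (x - y)) :=
      hf.comp (measurable_const.sub measurable_id)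
    have hFbdd : ∀ y : EuclideanSpace ℝ (Fin n₀), |f (x - y)| ≤ Mf := fun y => hMf _
    obtain ⟨G, hGdef⟩ : ∃ G : Lp ℝ 2 (volume.restrict Ω) → ℝ,
        ∀ u : Lp ℝ 2 (volume.restrict Ω),
          G u = ∫ a in Ω, b (u a) * f (x - a) := ⟨_, fun u => rfl⟩
    have hGlip : ∀ u v : Lp ℝ 2 (volume.restrict Ω), |G u - G v| ≤ Mf * Lb * ts * ‖u - v‖ := by
      intro u v
      rw [hGdef, hGdef]
      have h := key_lip (F := fun y => f (x - y)) hLb hblip hbbdd hFmeas hFbdd hMf0 u v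
      rw [htμ, ← hts] at h
      simpa using h
    have hGbdd : ∀ u : Lp ℝ 2 (volume.restrict Ω), |G u| ≤ Mb * Mf * t := by
      intro u
      rw [hGdef]
      have h := key_bdd (F := fun y => f (x - y)) hLb hblip hbbdd hFmeas hFbdd u
      rw [htμ] at h
      simpa using h
    have hGcont : Continuous G := by
      have : LipschitzWith (Real.toNNReal (Mf * Lb * ts)) G :=
        LipschitzWith.of_dist_le_mul fun u v => by
          rw [Real.dist_eq, dist_eq_norm]
          exact le_trans (hGlip u v) (mul_le_mul_of_nonneg_right
            (Real.le_coe_toNNReal _) (norm_nonneg _))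
      exact this.continuous
    have h1def : (fun θ : Set.Icc (-r) (0:ℝ) => ∫ y in Ω, b (φ θ y) * f (x - y))
        = fun θ => G (φ θ) := by
      funext θ; rw [hGdef]
    have h2def : (fun θ : Set.Icc (-r) (0:ℝ) => ∫ y in Ω, b (ψ θ y) * f (x - y))
        = fun θ => G (ψ θ) := by
      funext θ; rw [hGdef]
    rw [h1def, h2def]
    have hm1 : Measurable (fun θ : Set.Icc (-r) (0:ℝ) => G (φ θ)) :=
      (hGcont.comp φ.continuous).measurable
    have hm2 : Measurable (fun θ : Set.Icc (-r) (0:ℝ) => G (ψ θ)) :=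
      (hGcont.comp ψ.continuous).measurable
    have hb1 : ∀ θ : Set.Icc (-r) (0:ℝ), |G (φ θ)| ≤ Mb * Mf * t := fun θ => hGbdd _
    have hb2 : ∀ θ : Set.Icc (-r) (0:ℝ), |G (ψ θ)| ≤ Mb * Mf * t := fun θ => hGbdd _
    have hdiff : ∀ θ : Set.Icc (-r) (0:ℝ), |G (φ θ) - G (ψ θ)| ≤ Mf * Lb * ts * n := by
      intro θ
      refine le_trans (hGlip (φ θ) (ψ θ)) (mul_le_mul_of_nonneg_left ?_
        (mul_nonneg (mul_nonneg hMf0 hLb) hts0))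
      calc ‖φ θ - ψ θ‖ = ‖(φ - ψ) θ‖ := by rw [ContinuousMap.sub_apply]
        _ ≤ ‖φ - ψ‖ := ContinuousMap.norm_coe_le_norm _ _
    have hsplit : sintegral (ν φ) (fun θ => G (φ θ)) - sintegral (ν ψ) (fun θ => G (ψ θ))
        = sintegral (ν φ) (fun θ => G (φ θ) - G (ψ θ))
          + (sintegral (ν φ - ν ψ) (fun θ => G (ψ θ))) := by
      rw [sintegral_sub_fun (ν φ) _ _ hm1 hm2 (Mb * Mf * t) (Mb * Mf * t) hb1 hb2,
        ← sintegral_sub_measure (ν φ) (ν ψ) _ hm2 (Mb * Mf * t) hb2]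
      ring
    rw [hsplit]
    have hA : |sintegral (ν φ) (fun θ => G (φ θ) - G (ψ θ))| ≤ Mf * Lb * ts * n * MVg := by
      refine le_trans (abs_sintegral_le _ _ (Mf * Lb * ts * n) hdiff) ?_
      exact mul_le_mul_of_nonneg_left (hMVg φ)
        (mul_nonneg (mul_nonneg (mul_nonneg hMf0 hLb) hts0) hn0)
    have hB : |sintegral (ν φ - ν ψ) (fun θ => G (ψ θ))| ≤ Mb * Mf * t * (LVg * n) := by
      refine le_trans (abs_sintegral_le _ _ (Mb * Mf * t) hb2) ?_
      exact mul_le_mul_of_nonneg_left (hLVg φ ψ)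
        (mul_nonneg (mul_nonneg hMb0 hMf0) htpos.le)
    calc |sintegral (ν φ) (fun θ => G (φ θ) - G (ψ θ))
          + sintegral (ν φ - ν ψ) (fun θ => G (ψ θ))|
        ≤ |sintegral (ν φ) (fun θ => G (φ θ) - G (ψ θ))|
          + |sintegral (ν φ - ν ψ) (fun θ => G (ψ θ))| := abs_add_le _ _
      _ ≤ C := by rw [hC]; linarith
  -- from pointwise bound to eLpNorm bound
  have hbound := eLpNorm_le_of_ae_bound (μ := volume.restrict Ω) (p := 2)
    (f := fun x => sintegral (ν φ) (fun θ => ∫ y in Ω, b (φ θ y) * f (x - y)) -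
        sintegral (ν ψ) (fun θ => ∫ y in Ω, b (ψ θ y) * f (x - y)))
    (C := C) (ae_of_all _ fun x => by simpa [Real.norm_eq_abs] using hpt x)
  refine le_trans hbound ?_
  have h2inv : ((2:ENNReal).toReal)⁻¹ = (1:ℝ)/2 := by norm_num
  have hμofReal : (volume.restrict Ω) Set.univ = ENNReal.ofReal t := by
    rw [Measure.restrict_apply_univ, ht, ENNReal.ofReal_toReal hΩfin]
  rw [h2inv, hμofReal, ENNReal.ofReal_rpow_of_pos htpos, ← ENNReal.ofReal_mul (by positivity)]
  apply ENNReal.ofReal_le_ofReal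
  have key : t ^ ((1:ℝ)/2) * C = Mf * t * (Lb * MVg + Mb * ts * LVg) * n := by
    rw [← hts, hC]
    linear_combination (Mf * Lb * n * MVg) * htsts
  exact key.le
end

section
/- Let η_k : C → [0,r] and h_k : C → ℝ (k ∈ ℕ) be arbitrary maps, let b : ℝ → ℝ be continuous with |b(s)| ≤ C₁|s| + C₂ for all s (C₁, C₂ ≥ 0), and let φ, ψ ∈ C be such that Σ_k |h_k(ψ) − h_k(φ)| < ∞. Then the function K₂(x) := Σ_k ( ∫_Ω b(φ(−η_k(ψ))(y)) f(x−y) dy ) · ( h_k(ψ) − h_k(φ) ) belongs to L²(Ω) and satisfies ‖K₂‖_{L²(Ω)} ≤ M_f ( C₁ |Ω| ‖φ‖_C + C₂ |Ω|^{3/2} ) · Σ_k | h_k(ψ) − h_k(φ) |. -/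
open MeasureTheory Set Filter Topology

set_option maxHeartbeats 1000000 in
/-- estimate for the term `K₂ⁿ` in the proof of Lemma 1: For arbitrary
delay functions `η_k : C → [0,r]` and jump heights `h_k : C → ℝ`, `b` continuous with
linear growth `|b(s)| ≤ C₁|s| + C₂`, and `φ, ψ ∈ C` with `Σ_k |h_k(ψ) − h_k(φ)| < ∞`,
the function `K₂(x) = Σ_k (∫_Ω b(φ(−η_k(ψ))(y)) f(x−y) dy)(h_k(ψ) − h_k(φ))`
belongs to `L²(Ω)` and
`‖K₂‖_{L²} ≤ M_f (C₁|Ω|‖φ‖_C + C₂|Ω|^{3/2}) Σ_k |h_k(ψ) − h_k(φ)|`. -/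
theorem stmt7
    {n₀ : ℕ} (Ω : Set (EuclideanSpace ℝ (Fin n₀)))
    (hΩmeas : MeasurableSet Ω) (hΩbdd : Bornology.IsBounded Ω)
    (hΩpos : 0 < volume Ω)
    (r : ℝ) (hr : 0 < r)
    (f : EuclideanSpace ℝ (Fin n₀) → ℝ) (hf : Measurable f)
    (Mf : ℝ) (hMf : ∀ z, |f z| ≤ Mf)
    (η : ℕ → C(Set.Icc (-r) (0:ℝ), Lp ℝ 2 (volume.restrict Ω)) → ℝ)
    (hη : ∀ k χ, η k χ ∈ Set.Icc (0:ℝ) r)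
    (h : ℕ → C(Set.Icc (-r) (0:ℝ), Lp ℝ 2 (volume.restrict Ω)) → ℝ)
    (b : ℝ → ℝ) (hb : Continuous b)
    (C₁ C₂ : ℝ) (hC₁ : 0 ≤ C₁) (hC₂ : 0 ≤ C₂)
    (hbgrowth : ∀ s : ℝ, |b s| ≤ C₁ * |s| + C₂)
    (φ ψ : C(Set.Icc (-r) (0:ℝ), Lp ℝ 2 (volume.restrict Ω)))
    (hsum : Summable (fun k => |h k ψ - h k φ|)) :
    MemLp (fun x => ∑' k : ℕ,
        (∫ y in Ω, b (φ (Set.projIcc (-r) 0 (by linarith) (-(η k ψ))) y) * f (x - y)) *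
          (h k ψ - h k φ))
      2 (volume.restrict Ω) ∧
    eLpNorm (fun x => ∑' k : ℕ,
        (∫ y in Ω, b (φ (Set.projIcc (-r) 0 (by linarith) (-(η k ψ))) y) * f (x - y)) *
          (h k ψ - h k φ))
        2 (volume.restrict Ω)
      ≤ ENNReal.ofReal (Mf * (C₁ * (volume Ω).toReal * ‖φ‖ +
          C₂ * (volume Ω).toReal ^ ((3:ℝ)/2)) * ∑' k : ℕ, |h k ψ - h k φ|) := by
  classical
  have hrr : (-r : ℝ) ≤ 0 := by linarith
  have hμuniv : (volume.restrict Ω) Set.univ = volume Ω := by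
    rw [Measure.restrict_apply MeasurableSet.univ, Set.univ_inter]
  have hvol : volume Ω < ⊤ := hΩbdd.measure_lt_top
  have hμfin : IsFiniteMeasure (volume.restrict Ω) := ⟨by rw [hμuniv]; exact hvol⟩
  have hMf0 : 0 ≤ Mf := (abs_nonneg _).trans (hMf 0)
  set vΩ : ℝ := (volume Ω).toReal with hvΩ
  have hvΩpos : 0 < vΩ := ENNReal.toReal_pos hΩpos.ne' hvol.ne
  set Δ : ℕ → ℝ := fun k => h k ψ - h k φ with hΔ
  set θ : ℕ → Set.Icc (-r) (0:ℝ) := fun k => Set.projIcc (-r) 0 hrr (-(η k ψ)) with hθ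
  set g : ℕ → EuclideanSpace ℝ (Fin n₀) → ℝ := fun k y => b (φ (θ k) y) with hg
  set F : ℕ → EuclideanSpace ℝ (Fin n₀) → ℝ :=
    fun k x => ∫ y, g k y * f (x - y) ∂(volume.restrict Ω) with hFdef
  set K : EuclideanSpace ℝ (Fin n₀) → ℝ := fun x => ∑' k, F k x * Δ k with hK
  set S : ℝ := ∑' k, |Δ k| with hS
  have hS0 : 0 ≤ S := tsum_nonneg fun k => abs_nonneg _
  have hgm : ∀ k, AEStronglyMeasurable (g k) (volume.restrict Ω) := fun k =>
    hb.comp_aestronglyMeasurable (Lp.aestronglyMeasurable (φ (θ k)))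
  have huint : ∀ k, Integrable (fun y => (φ (θ k) : _ → ℝ) y) (volume.restrict Ω) :=
    fun k => (Lp.memLp (φ (θ k))).integrable one_le_two
  have hgint : ∀ k, Integrable (g k) (volume.restrict Ω) := by
    intro k
    refine Integrable.mono' (((huint k).abs.const_mul C₁).add (integrable_const C₂)) (hgm k) ?_
    exact Eventually.of_forall fun y => by
      simpa [Real.norm_eq_abs] using hbgrowth ((φ (θ k) : _ → ℝ) y)
  -- L¹ bound via Cauchy–Schwarz
  have huL1 : ∀ k, ∫ y, |(φ (θ k) : _ → ℝ) y| ∂(volume.restrict Ω) ≤ vΩ ^ ((2:ℝ)⁻¹) * ‖φ‖ := by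
    intro k
    have h1 := eLpNorm_le_eLpNorm_mul_rpow_measure_univ (μ := volume.restrict Ω)
      (p := 1) (q := 2) one_le_two (Lp.aestronglyMeasurable (φ (θ k)))
    have hexp : (1 / (1:ENNReal).toReal - 1 / (2:ENNReal).toReal) = ((2:ℝ)⁻¹) := by norm_num
    rw [hexp] at h1
    have heq : ∫ y, |(φ (θ k) : _ → ℝ) y| ∂(volume.restrict Ω)
        = (eLpNorm (φ (θ k) : _ → ℝ) 1 (volume.restrict Ω)).toReal := by
      rw [eLpNorm_one_eq_lintegral_enorm]
      simpa [Real.norm_eq_abs] using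
        integral_norm_eq_lintegral_enorm (Lp.aestronglyMeasurable (φ (θ k)))
    rw [heq]
    have h2 : (eLpNorm (φ (θ k) : _ → ℝ) 1 (volume.restrict Ω)).toReal ≤
        (eLpNorm (φ (θ k) : _ → ℝ) 2 (volume.restrict Ω)
          * (volume.restrict Ω) Set.univ ^ ((2:ℝ)⁻¹)).toReal := by
      refine ENNReal.toReal_mono ?_ h1
      exact ENNReal.mul_ne_top (Lp.eLpNorm_ne_top (φ (θ k)))
        (by rw [hμuniv]; exact (ENNReal.rpow_lt_top_of_nonneg (by norm_num) hvol.ne).ne)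
    refine h2.trans ?_
    rw [ENNReal.toReal_mul, hμuniv, ← ENNReal.toReal_rpow]
    have h3 : (eLpNorm (φ (θ k) : _ → ℝ) 2 (volume.restrict Ω)).toReal ≤ ‖φ‖ :=
      le_trans (le_of_eq (Lp.norm_def (φ (θ k))).symm) (φ.norm_coe_le_norm (θ k))
    calc (eLpNorm (φ (θ k) : _ → ℝ) 2 (volume.restrict Ω)).toReal * vΩ ^ ((2:ℝ)⁻¹)
        ≤ ‖φ‖ * vΩ ^ ((2:ℝ)⁻¹) :=
          mul_le_mul_of_nonneg_right h3 (Real.rpow_nonneg ENNReal.toReal_nonneg _)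
      _ = vΩ ^ ((2:ℝ)⁻¹) * ‖φ‖ := mul_comm _ _
  have hgL1 : ∀ k, ∫ y, |g k y| ∂(volume.restrict Ω)
      ≤ C₁ * (vΩ ^ ((2:ℝ)⁻¹) * ‖φ‖) + C₂ * vΩ := by
    intro k
    have h1 : ∫ y, |g k y| ∂(volume.restrict Ω)
        ≤ ∫ y, C₁ * |(φ (θ k) : _ → ℝ) y| + C₂ ∂(volume.restrict Ω) := by
      refine integral_mono (hgint k).abs
        (((huint k).abs.const_mul C₁).add (integrable_const C₂)) ?_
      intro y; exact hbgrowth _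
    refine h1.trans ?_
    rw [integral_add ((huint k).abs.const_mul C₁) (integrable_const C₂),
      integral_const_mul, integral_const, measureReal_def, hμuniv, ← hvΩ, smul_eq_mul]
    nlinarith [huL1 k, hvΩpos.le]
  set A : ℝ := Mf * (C₁ * (vΩ ^ ((2:ℝ)⁻¹) * ‖φ‖) + C₂ * vΩ) with hA
  have hA0 : 0 ≤ A := by
    apply mul_nonneg hMf0
    have h1 : 0 ≤ vΩ ^ ((2:ℝ)⁻¹) * ‖φ‖ :=
      mul_nonneg (Real.rpow_nonneg hvΩpos.le _) (norm_nonneg _)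
    nlinarith [hvΩpos.le]
  have hFbound : ∀ k x, |F k x| ≤ A := by
    intro k x
    have h1 : |F k x| ≤ ∫ y, ‖g k y * f (x - y)‖ ∂(volume.restrict Ω) := by
      simpa [Real.norm_eq_abs] using
        norm_integral_le_integral_norm (μ := volume.restrict Ω) (fun y => g k y * f (x - y))
    have h2 : ∫ y, ‖g k y * f (x - y)‖ ∂(volume.restrict Ω)
        ≤ ∫ y, |g k y| * Mf ∂(volume.restrict Ω) := by
      refine integral_mono_of_nonneg (Eventually.of_forall fun y => norm_nonneg _)
        ((hgint k).abs.mul_const Mf) (Eventually.of_forall fun y => ?_)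
      simp only [Real.norm_eq_abs, abs_mul]
      exact mul_le_mul_of_nonneg_left (hMf _) (abs_nonneg _)
    have h3 : ∫ y, |g k y| * Mf ∂(volume.restrict Ω)
        = Mf * ∫ y, |g k y| ∂(volume.restrict Ω) := by
      rw [integral_mul_const]; ring
    refine h1.trans (h2.trans ?_)
    rw [h3, hA]
    exact mul_le_mul_of_nonneg_left (hgL1 k) hMf0
  have hsumΔ : Summable (fun k => |Δ k|) := hsum
  have hsumm : ∀ x, Summable (fun k => F k x * Δ k) := by
    intro x
    refine Summable.of_norm_bounded (hsumΔ.mul_left A) fun k => ?_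
    rw [Real.norm_eq_abs, abs_mul]
    exact mul_le_mul_of_nonneg_right (hFbound k x) (abs_nonneg _)
  have hKbound : ∀ x, ‖K x‖ ≤ A * S := by
    intro x
    have h1 : ‖K x‖ ≤ ∑' k, ‖F k x * Δ k‖ := norm_tsum_le_tsum_norm (hsumm x).norm
    refine h1.trans ?_
    rw [hS, ← tsum_mul_left]
    refine Summable.tsum_le_tsum (fun k => ?_) (hsumm x).norm (hsumΔ.mul_left A)
    rw [Real.norm_eq_abs, abs_mul]
    exact mul_le_mul_of_nonneg_right (hFbound k x) (abs_nonneg _)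
  have hFm : ∀ k, AEStronglyMeasurable (F k) (volume.restrict Ω) := by
    intro k
    have h1 : AEStronglyMeasurable
        (fun p : EuclideanSpace ℝ (Fin n₀) × EuclideanSpace ℝ (Fin n₀) =>
          g k p.2 * f (p.1 - p.2)) ((volume.restrict Ω).prod (volume.restrict Ω)) :=
      (hgm k).comp_snd.mul ((hf.comp (measurable_fst.sub measurable_snd)).aestronglyMeasurable)
    exact h1.integral_prod_right'
  have hKm : AEStronglyMeasurable K (volume.restrict Ω) := by
    refine aestronglyMeasurable_of_tendsto_ae atTop
      (f := fun n x => ∑ k ∈ Finset.range n, F k x * Δ k)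
      (fun n => Finset.aestronglyMeasurable_fun_sum _ fun k _ =>
        (hFm k).mul aestronglyMeasurable_const) ?_
    exact Eventually.of_forall fun x => (hsumm x).hasSum.tendsto_sum_nat
  have hmem : MemLp K 2 (volume.restrict Ω) :=
    MemLp.of_bound hKm (A * S) (Eventually.of_forall hKbound)
  refine ⟨hmem, ?_⟩
  have h1 : eLpNorm K 2 (volume.restrict Ω)
      ≤ (volume.restrict Ω) Set.univ ^ ((2:ENNReal).toReal)⁻¹ * ENNReal.ofReal (A * S) :=
    eLpNorm_le_of_ae_bound (Eventually.of_forall hKbound)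
  refine h1.trans ?_
  have h2 : (volume.restrict Ω) Set.univ ^ ((2:ENNReal).toReal)⁻¹
      = ENNReal.ofReal (vΩ ^ ((2:ℝ)⁻¹)) := by
    rw [hμuniv, ← ENNReal.ofReal_toReal hvol.ne, ← hvΩ,
      ENNReal.ofReal_rpow_of_nonneg hvΩpos.le (by norm_num)]
    norm_num
  rw [h2, ← ENNReal.ofReal_mul (Real.rpow_nonneg hvΩpos.le _)]
  apply ENNReal.ofReal_le_ofReal
  have e1 : vΩ ^ ((2:ℝ)⁻¹) * vΩ ^ ((2:ℝ)⁻¹) = vΩ := by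
    rw [← Real.rpow_add hvΩpos]; norm_num
  have e2 : vΩ ^ ((2:ℝ)⁻¹) * vΩ = vΩ ^ ((3:ℝ)/2) := by
    nth_rewrite 2 [← Real.rpow_one vΩ]
    rw [← Real.rpow_add hvΩpos]; norm_num
  have key : vΩ ^ ((2:ℝ)⁻¹) * A = Mf * (C₁ * vΩ * ‖φ‖ + C₂ * vΩ ^ ((3:ℝ)/2)) := by
    rw [hA]; linear_combination Mf * C₁ * ‖φ‖ * e1 + Mf * C₂ * e2
  calc vΩ ^ ((2:ℝ)⁻¹) * (A * S) = (vΩ ^ ((2:ℝ)⁻¹) * A) * S := by ring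
    _ = Mf * (C₁ * vΩ * ‖φ‖ + C₂ * vΩ ^ ((3:ℝ)/2)) * S := by rw [key]
    _ ≤ Mf * (C₁ * vΩ * ‖φ‖ + C₂ * vΩ ^ ((3:ℝ)/2)) * S := le_rfl
end

section
/- Let η_k : C → [0,r] and h_k : C → ℝ (k ∈ ℕ) be continuous maps such that the series Σ_k h_k(φ) converges absolutely for every φ ∈ C and uniformly on every bounded subset of C (i.e. for every bounded B ⊆ C, sup_{φ∈B} Σ_{k≥N} |h_k(φ)| → 0 as N → ∞). Let b : ℝ → ℝ be Lipschitz with constant L_b and satisfy |b(s)| ≤ C₁|s| + C₂ for all s. Then the map F_d : C → L²(Ω) defined by F_d(φ)(x) := Σ_k ( ∫_Ω b(φ(−η_k(φ))(y)) f(x−y) dy ) · h_k(φ) is well defined and continuous: φⁿ → φ in C implies ‖F_d(φⁿ) − F_d(φ)‖_{L²(Ω)} → 0. -/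
open MeasureTheory Set Filter Topology

variable {n₀ : ℕ} {Ω : Set (EuclideanSpace ℝ (Fin n₀))}
  {f : EuclideanSpace ℝ (Fin n₀) → ℝ} {Mf : ℝ}
  {b : ℝ → ℝ} {C₁ C₂ : ℝ}

-- continuity of b from Lipschitz
lemma bcont_s9 {Lb : ℝ} (hblip : ∀ s t : ℝ, |b s - b t| ≤ Lb * |s - t|) : Continuous b := by
  have hLb0 : 0 ≤ Lb := by
    by_contra hneg
    push_neg at hneg
    have := hblip 0 1
    have h1 : (0:ℝ) ≤ |b 0 - b 1| := abs_nonneg _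
    nlinarith [abs_nonneg ((0:ℝ) - 1), abs_of_nonpos (show (0:ℝ)-1 ≤ 0 by norm_num)]
  have : LipschitzWith (Real.toNNReal Lb) b := by
    apply LipschitzWith.of_dist_le_mul
    intro x y
    simpa [Real.dist_eq, Real.coe_toNNReal _ hLb0] using hblip x y
  exact this.continuous

lemma integrand_integrable (hf : Measurable f) (hMf : ∀ z, |f z| ≤ Mf)
    (hb : Continuous b) (hbgrowth : ∀ s : ℝ, |b s| ≤ C₁ * |s| + C₂)
    [IsFiniteMeasure (volume.restrict Ω)]
    (u : Lp ℝ 2 (volume.restrict Ω)) (x : EuclideanSpace ℝ (Fin n₀)) :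
    Integrable (fun y => b (u y) * f (x - y)) (volume.restrict Ω) := by
  have hu : Integrable (fun y => |u y|) (volume.restrict Ω) :=
    ((Lp.memLp u).integrable (by norm_num)).abs
  have hg : Integrable (fun y => Mf * (C₁ * |u y| + C₂)) (volume.restrict Ω) :=
    (((hu.const_mul C₁).add (integrable_const C₂)).const_mul Mf)
  refine Integrable.mono' hg ?_ ?_
  · exact ((hb.measurable.comp (Lp.stronglyMeasurable u).measurable).mul
      (hf.comp (measurable_const.sub measurable_id))).aestronglyMeasurable
  · refine Filter.Eventually.of_forall fun y => ?_
    have h1 : |b (u y) * f (x - y)| ≤ (C₁ * |u y| + C₂) * Mf := by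
      rw [abs_mul]
      exact mul_le_mul (hbgrowth _) (hMf _) (abs_nonneg _)
        ((abs_nonneg (b (u y))).trans (hbgrowth _))
    calc ‖b (u y) * f (x - y)‖ = |b (u y) * f (x - y)| := rfl
      _ ≤ (C₁ * |u y| + C₂) * Mf := h1
      _ = Mf * (C₁ * |u y| + C₂) := mul_comm _ _

-- L1 bounded by L2 times sqrt measure
lemma l1_le_l2 [IsFiniteMeasure (volume.restrict Ω)] (w : Lp ℝ 2 (volume.restrict Ω)) :
    ∫ y, |w y| ∂(volume.restrict Ω) ≤
      ((volume.restrict Ω) Set.univ ^ (1/2:ℝ)).toReal * ‖w‖ := by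
  have hint : Integrable (fun y => w y) (volume.restrict Ω) :=
    (Lp.memLp w).integrable (by norm_num)
  have h1 := eLpNorm_le_eLpNorm_mul_rpow_measure_univ (μ := volume.restrict Ω)
    (f := (w : _ → ℝ)) (p := 1) (q := 2) (by norm_num) (Lp.aestronglyMeasurable w)
  norm_num at h1
  have h2 : ∫ y, |w y| ∂(volume.restrict Ω) = (eLpNorm (w : _ → ℝ) 1 (volume.restrict Ω)).toReal := by
    rw [eLpNorm_one_eq_lintegral_enorm]
    rw [integral_eq_lintegral_of_nonneg_ae (Filter.Eventually.of_forall fun y => abs_nonneg _)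
      hint.abs.aestronglyMeasurable]
    congr 1
    apply lintegral_congr fun y => ?_
    rw [← Real.norm_eq_abs]
    exact ofReal_norm _
  rw [h2]
  have hfin : eLpNorm (w : _ → ℝ) 2 (volume.restrict Ω) * (volume.restrict Ω) Set.univ ^ (1/2:ℝ) ≠ ⊤ := by
    apply ENNReal.mul_ne_top (Lp.eLpNorm_ne_top w)
    exact ENNReal.rpow_ne_top_of_nonneg (by norm_num) (measure_ne_top _ _)
  calc (eLpNorm (w : _ → ℝ) 1 (volume.restrict Ω)).toReal
      ≤ (eLpNorm (w : _ → ℝ) 2 (volume.restrict Ω) * (volume.restrict Ω) Set.univ ^ (1/2:ℝ)).toReal := by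
        apply ENNReal.toReal_mono hfin
        convert h1 using 3
        norm_num
    _ = ((volume.restrict Ω) Set.univ ^ (1/2:ℝ)).toReal * ‖w‖ := by
        rw [ENNReal.toReal_mul, Lp.norm_def, mul_comm]

-- pointwise bound on the convolution integral
lemma conv_bound (hf : Measurable f) (hMf : ∀ z, |f z| ≤ Mf)
    (hb : Continuous b) (hbgrowth : ∀ s : ℝ, |b s| ≤ C₁ * |s| + C₂)
    (hC₁ : 0 ≤ C₁) (hC₂ : 0 ≤ C₂) (hMf0 : 0 ≤ Mf)
    [IsFiniteMeasure (volume.restrict Ω)]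
    (u : Lp ℝ 2 (volume.restrict Ω)) (x : EuclideanSpace ℝ (Fin n₀)) :
    |∫ y, b (u y) * f (x - y) ∂(volume.restrict Ω)| ≤
      Mf * (C₁ * (((volume.restrict Ω) Set.univ ^ (1/2:ℝ)).toReal * ‖u‖)
        + C₂ * ((volume.restrict Ω) Set.univ).toReal) := by
  have hu : Integrable (fun y => |u y|) (volume.restrict Ω) :=
    ((Lp.memLp u).integrable (by norm_num)).abs
  have hg : Integrable (fun y => Mf * (C₁ * |u y| + C₂)) (volume.restrict Ω) :=
    (((hu.const_mul C₁).add (integrable_const C₂)).const_mul Mf)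
  have h1 : ‖∫ y, b (u y) * f (x - y) ∂(volume.restrict Ω)‖ ≤
      ∫ y, Mf * (C₁ * |u y| + C₂) ∂(volume.restrict Ω) := by
    apply norm_integral_le_of_norm_le hg
    refine Filter.Eventually.of_forall fun y => ?_
    calc ‖b (u y) * f (x - y)‖ = |b (u y)| * |f (x - y)| := abs_mul _ _
      _ ≤ (C₁ * |u y| + C₂) * Mf := mul_le_mul (hbgrowth _) (hMf _) (abs_nonneg _)
          ((abs_nonneg (b (u y))).trans (hbgrowth _))
      _ = Mf * (C₁ * |u y| + C₂) := mul_comm _ _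
  have h2 : ∫ y, Mf * (C₁ * |u y| + C₂) ∂(volume.restrict Ω)
      = Mf * (C₁ * ∫ y, |u y| ∂(volume.restrict Ω)
        + C₂ * ((volume.restrict Ω) Set.univ).toReal) := by
    rw [integral_const_mul, integral_add (hu.const_mul C₁) (integrable_const C₂),
      integral_const_mul, integral_const]
    simp [mul_comm, Measure.real]
  rw [Real.norm_eq_abs] at h1
  refine h1.trans ?_
  rw [h2]
  apply mul_le_mul_of_nonneg_left _ hMf0
  have := l1_le_l2 u
  nlinarith [l1_le_l2 u]

-- difference bound
lemma conv_diff (hf : Measurable f) (hMf : ∀ z, |f z| ≤ Mf)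
    (hb : Continuous b) (hbgrowth : ∀ s : ℝ, |b s| ≤ C₁ * |s| + C₂)
    {Lb : ℝ} (hLb : 0 ≤ Lb) (hblip : ∀ s t : ℝ, |b s - b t| ≤ Lb * |s - t|)
    (hMf0 : 0 ≤ Mf)
    [IsFiniteMeasure (volume.restrict Ω)]
    (u v : Lp ℝ 2 (volume.restrict Ω)) (x : EuclideanSpace ℝ (Fin n₀)) :
    |(∫ y, b (u y) * f (x - y) ∂(volume.restrict Ω))
      - (∫ y, b (v y) * f (x - y) ∂(volume.restrict Ω))| ≤
      Mf * Lb * (((volume.restrict Ω) Set.univ ^ (1/2:ℝ)).toReal * ‖u - v‖) := by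
  have hiu := integrand_integrable hf hMf hb hbgrowth u x
  have hiv := integrand_integrable hf hMf hb hbgrowth v x
  have hw : Integrable (fun y => |(u - v) y|) (volume.restrict Ω) :=
    ((Lp.memLp (u - v)).integrable (by norm_num)).abs
  rw [← integral_sub hiu hiv]
  have h1 : ‖∫ y, (b (u y) * f (x - y) - b (v y) * f (x - y)) ∂(volume.restrict Ω)‖ ≤
      ∫ y, Mf * Lb * |(u - v) y| ∂(volume.restrict Ω) := by
    apply norm_integral_le_of_norm_le (hw.const_mul _)
    have hae : ∀ᵐ y ∂(volume.restrict Ω), (u - v) y = u y - v y := Lp.coeFn_sub u v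
    refine hae.mono fun y hy => ?_
    rw [Real.norm_eq_abs, hy]
    calc |b (u y) * f (x - y) - b (v y) * f (x - y)|
        = |b (u y) - b (v y)| * |f (x - y)| := by rw [← abs_mul]; ring_nf
      _ ≤ (Lb * |u y - v y|) * Mf := mul_le_mul (hblip _ _) (hMf _) (abs_nonneg _)
          (by positivity)
      _ = Mf * Lb * |u y - v y| := by ring
  rw [Real.norm_eq_abs] at h1
  refine h1.trans ?_
  rw [integral_const_mul]
  apply mul_le_mul_of_nonneg_left (l1_le_l2 (u - v)) (by positivity)

-- strong measurability in x
lemma conv_meas (hf : Measurable f) (hb : Continuous b)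
    (u : Lp ℝ 2 (volume.restrict Ω)) :
    StronglyMeasurable fun x : EuclideanSpace ℝ (Fin n₀) =>
      ∫ y, b (u y) * f (x - y) ∂(volume.restrict Ω) := by
  apply MeasureTheory.StronglyMeasurable.integral_prod_right
    (f := fun x y => b (u y) * f (x - y))
  apply Measurable.stronglyMeasurable
  exact ((hb.measurable.comp ((Lp.stronglyMeasurable u).measurable.comp measurable_snd)).mul
    (hf.comp (measurable_fst.sub measurable_snd)))

-- abstract epsilon-N argument
lemma key_abstract {X : Type*} (a : ℕ → ℕ → X → ℝ) (c : ℕ → X → ℝ)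
    (p : ℕ → ℕ → ℝ) (q : ℕ → ℝ) (AR : ℝ) (hAR : 0 ≤ AR)
    (hab : ∀ (n k : ℕ) (x : X), |a n k x| ≤ AR * |p n k|)
    (hcb : ∀ (k : ℕ) (x : X), |c k x| ≤ AR * |q k|)
    (hsp : ∀ n, Summable (fun k => |p n k|)) (hsq : Summable (fun k => |q k|))
    (d : ℕ → ℕ → ℝ)
    (hdk : ∀ (k n : ℕ) (x : X), |a n k x - c k x| ≤ d n k)
    (hd0 : ∀ k, Filter.Tendsto (fun n => d n k) Filter.atTop (nhds 0))
    (N₁ : ℕ) (ε : ℝ) (hε : 0 < ε)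
    (htailp : ∀ n, ∑' k, |p n (k + N₁)| ≤ ε / (4 * (AR + 1)))
    (htailq : ∑' k, |q (k + N₁)| ≤ ε / (4 * (AR + 1))) :
    ∃ N : ℕ, ∀ n ≥ N, ∀ x : X, |(∑' k : ℕ, a n k x) - (∑' k : ℕ, c k x)| ≤ ε := by
  have hsa : ∀ n x, Summable (fun k => a n k x) := fun n x =>
    Summable.of_norm_bounded ((hsp n).mul_left AR) (fun k => hab n k x)
  have hsc : ∀ x, Summable (fun k => c k x) := fun x =>
    Summable.of_norm_bounded (hsq.mul_left AR) (fun k => hcb k x)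
  have hhead : Tendsto (fun n => ∑ k ∈ Finset.range N₁, d n k) atTop (𝓝 0) := by
    have e3 : (0:ℝ) = ∑ k ∈ Finset.range N₁, (0:ℝ) := by simp
    rw [e3]
    exact tendsto_finset_sum _ (fun k _ => hd0 k)
  obtain ⟨N₂, hN₂⟩ := (eventually_atTop).mp
    (hhead.eventually (gt_mem_nhds (by linarith : (0:ℝ) < ε/2)))
  refine ⟨N₂, fun n hn x => ?_⟩
  have hsd : Summable (fun k => |a n k x - c k x|) := by
    apply Summable.of_nonneg_of_le (fun k => abs_nonneg _)
      (fun k => (abs_sub _ _).trans (add_le_add (hab n k x) (hcb k x)))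
    exact ((hsp n).mul_left AR).add (hsq.mul_left AR)
  have h0 : (∑' k, a n k x) - (∑' k, c k x) = ∑' k, (a n k x - c k x) :=
    (Summable.tsum_sub (hsa n x) (hsc x)).symm
  rw [h0]
  have habs : |∑' k, (a n k x - c k x)| ≤ ∑' k, |a n k x - c k x| :=
    norm_tsum_le_tsum_norm (f := fun k => a n k x - c k x) hsd
  refine habs.trans ?_
  rw [← Summable.sum_add_tsum_nat_add (f := fun k => |a n k x - c k x|) N₁ hsd]
  have hs1 : Summable (fun k => AR * |p n (k + N₁)|) :=
    ((summable_nat_add_iff (f := fun k => |p n k|) N₁).2 (hsp n)).mul_left AR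
  have hs2 : Summable (fun k => AR * |q (k + N₁)|) :=
    ((summable_nat_add_iff (f := fun k => |q k|) N₁).2 hsq).mul_left AR
  have htail : ∑' k, |a n (k + N₁) x - c (k + N₁) x| ≤
      AR * (∑' k, |p n (k + N₁)|) + AR * (∑' k, |q (k + N₁)|) := by
    calc ∑' k, |a n (k + N₁) x - c (k + N₁) x|
        ≤ ∑' k, (AR * |p n (k + N₁)| + AR * |q (k + N₁)|) := by
          apply Summable.tsum_le_tsum _ ((summable_nat_add_iff (f := fun k => |a n k x - c k x|) N₁).2 hsd) (hs1.add hs2)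
          intro k
          exact (abs_sub _ _).trans (add_le_add (hab n (k + N₁) x) (hcb (k + N₁) x))
      _ = AR * (∑' k, |p n (k + N₁)|) + AR * (∑' k, |q (k + N₁)|) := by
          rw [Summable.tsum_add hs1 hs2, tsum_mul_left, tsum_mul_left]
  have hhd : ∑ k ∈ Finset.range N₁, |a n k x - c k x| ≤ ∑ k ∈ Finset.range N₁, d n k :=
    Finset.sum_le_sum (fun k _ => hdk k n x)
  have hN2 := hN₂ n hn
  have hfinal : AR * (∑' k, |p n (k + N₁)|) + AR * (∑' k, |q (k + N₁)|) ≤ ε / 2 := by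
    have hnn1 : (0:ℝ) ≤ ∑' k, |p n (k + N₁)| := tsum_nonneg (fun k => abs_nonneg _)
    have hnn2 : (0:ℝ) ≤ ∑' k, |q (k + N₁)| := tsum_nonneg (fun k => abs_nonneg _)
    have hq1 : AR / (AR + 1) ≤ 1 := by
      rw [div_le_one (by linarith)]; linarith
    have hp1 : (0:ℝ) < AR + 1 := by linarith
    have e4 : AR * (ε / (4 * (AR + 1))) = AR / (AR + 1) * (ε / 4) := by
      rw [← mul_div_assoc, div_mul_div_comm, mul_comm (AR + 1) 4]
    have e5 : AR / (AR + 1) * (ε / 4) ≤ 1 * (ε / 4) :=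
      mul_le_mul_of_nonneg_right hq1 (by linarith : (0:ℝ) ≤ ε / 4)
    have e6 := mul_le_mul_of_nonneg_left (htailp n) hAR
    have e7 := mul_le_mul_of_nonneg_left htailq hAR
    linarith
  linarith [htail, hhd, hN2]

set_option maxHeartbeats 2000000 in
/-- discrete-delay part of Lemma 1: Let `η_k : C → [0,r]` and
`h_k : C → ℝ` be continuous, with `Σ_k h_k(φ)` absolutely convergent for each `φ` and
uniformly convergent on bounded subsets of `C` (tail sums uniformly small). Let `b` be
Lipschitz with constant `L_b` and of linear growth `|b(s)| ≤ C₁|s| + C₂`. Then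
`F_d(φ)(x) = Σ_k (∫_Ω b(φ(−η_k(φ))(y)) f(x−y) dy) h_k(φ)` is a well-defined and
continuous map `C → L²(Ω)`: `φⁿ → φ` in `C` implies `‖F_d(φⁿ) − F_d(φ)‖_{L²} → 0`. -/
theorem stmt9
    {n₀ : ℕ} (Ω : Set (EuclideanSpace ℝ (Fin n₀)))
    (hΩmeas : MeasurableSet Ω) (hΩbdd : Bornology.IsBounded Ω)
    (hΩpos : 0 < volume Ω)
    (r : ℝ) (hr : 0 < r)
    (f : EuclideanSpace ℝ (Fin n₀) → ℝ) (hf : Measurable f)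
    (Mf : ℝ) (hMf : ∀ z, |f z| ≤ Mf)
    (η : ℕ → C(Set.Icc (-r) (0:ℝ), Lp ℝ 2 (volume.restrict Ω)) → ℝ)
    (hηmem : ∀ k χ, η k χ ∈ Set.Icc (0:ℝ) r)
    (hηcont : ∀ k, Continuous (η k))
    (h : ℕ → C(Set.Icc (-r) (0:ℝ), Lp ℝ 2 (volume.restrict Ω)) → ℝ)
    (hhcont : ∀ k, Continuous (h k))
    (hhabs : ∀ χ, Summable (fun k => |h k χ|))
    (hhunif : ∀ B : Set (C(Set.Icc (-r) (0:ℝ), Lp ℝ 2 (volume.restrict Ω))),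
      Bornology.IsBounded B → ∀ ε > (0:ℝ), ∃ N : ℕ, ∀ χ ∈ B, ∀ m ≥ N,
        ∑' k : ℕ, |h (k + m) χ| < ε)
    (b : ℝ → ℝ) (Lb : ℝ) (hLb : 0 ≤ Lb)
    (hblip : ∀ s t : ℝ, |b s - b t| ≤ Lb * |s - t|)
    (C₁ C₂ : ℝ) (hC₁ : 0 ≤ C₁) (hC₂ : 0 ≤ C₂)
    (hbgrowth : ∀ s : ℝ, |b s| ≤ C₁ * |s| + C₂) :
    (∀ φ : C(Set.Icc (-r) (0:ℝ), Lp ℝ 2 (volume.restrict Ω)),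
      MemLp (fun x => ∑' k : ℕ,
          (∫ y in Ω, b (φ (Set.projIcc (-r) 0 (by linarith) (-(η k φ))) y) * f (x - y)) *
            h k φ)
        2 (volume.restrict Ω)) ∧
    (∀ (φseq : ℕ → C(Set.Icc (-r) (0:ℝ), Lp ℝ 2 (volume.restrict Ω)))
       (φ : C(Set.Icc (-r) (0:ℝ), Lp ℝ 2 (volume.restrict Ω))),
      Tendsto (fun n => ‖φseq n - φ‖) atTop (nhds 0) →
      Tendsto (fun n => eLpNorm (fun x =>
          (∑' k : ℕ, (∫ y in Ω,
              b ((φseq n) (Set.projIcc (-r) 0 (by linarith) (-(η k (φseq n)))) y) *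
                f (x - y)) * h k (φseq n)) -
          (∑' k : ℕ, (∫ y in Ω,
              b (φ (Set.projIcc (-r) 0 (by linarith) (-(η k φ))) y) *
                f (x - y)) * h k φ))
          2 (volume.restrict Ω)) atTop (nhds 0)) := by
  haveI : IsFiniteMeasure (volume.restrict Ω) :=
    ⟨by rw [Measure.restrict_apply_univ]; exact hΩbdd.measure_lt_top⟩
  have hb : Continuous b := bcont_s9 hblip
  have hMf0 : 0 ≤ Mf := (abs_nonneg (f 0)).trans (hMf 0)
  set sqm : ℝ := ((volume.restrict Ω) Set.univ ^ (1/2:ℝ)).toReal with hsqm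
  set mv : ℝ := ((volume.restrict Ω) Set.univ).toReal with hmv
  have hsqm0 : 0 ≤ sqm := ENNReal.toReal_nonneg
  have hmv0 : 0 ≤ mv := ENNReal.toReal_nonneg
  set A : ℝ → ℝ := fun R => Mf * (C₁ * (sqm * R) + C₂ * mv) with hA
  have hAmono : ∀ R₁ R₂ : ℝ, R₁ ≤ R₂ → A R₁ ≤ A R₂ := fun R₁ R₂ hR => by
    simp only [hA]
    have h1 := mul_le_mul_of_nonneg_left hR hsqm0
    have h2 := mul_le_mul_of_nonneg_left h1 hC₁
    exact mul_le_mul_of_nonneg_left (by linarith) hMf0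
  have hA0 : ∀ R : ℝ, 0 ≤ R → 0 ≤ A R := fun R hR => by simp only [hA]; positivity
  -- Part 1
  constructor
  · intro φ
    set u : ℕ → Lp ℝ 2 (volume.restrict Ω) := fun k => φ (Set.projIcc (-r) 0 (by linarith) (-(η k φ))) with hu
    set g : ℕ → EuclideanSpace ℝ (Fin n₀) → ℝ :=
      fun k x => (∫ y, b ((u k) y) * f (x - y) ∂(volume.restrict Ω)) * h k φ with hg
    have hub : ∀ k, ‖u k‖ ≤ ‖φ‖ := fun k => φ.norm_coe_le_norm _
    have hgb : ∀ k x, |g k x| ≤ A ‖φ‖ * |h k φ| := by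
      intro k x
      rw [hg, abs_mul]
      apply mul_le_mul_of_nonneg_right _ (abs_nonneg _)
      exact (conv_bound hf hMf hb hbgrowth hC₁ hC₂ hMf0 (u k) x).trans (hAmono _ _ (hub k))
    have hAφ : 0 ≤ A ‖φ‖ := hA0 _ (norm_nonneg φ)
    have hsumm : ∀ x, Summable (fun k => g k x) := by
      intro x
      exact Summable.of_norm_bounded ((hhabs φ).mul_left (A ‖φ‖)) (fun k => hgb k x)
    have hmeas : ∀ k, StronglyMeasurable (g k) := by
      intro k
      exact (conv_meas hf hb (u k)).mul_const _
    have hlim : StronglyMeasurable (fun x => ∑' k, g k x) := by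
      apply stronglyMeasurable_of_tendsto (f := fun N x => ∑ k ∈ Finset.range N, g k x) atTop
      · exact fun N => Finset.stronglyMeasurable_fun_sum _ (fun k _ => hmeas k)
      · rw [tendsto_pi_nhds]
        exact fun x => (hsumm x).hasSum.tendsto_sum_nat
    apply MemLp.of_bound hlim.aestronglyMeasurable (A ‖φ‖ * ∑' k, |h k φ|)
    refine Filter.Eventually.of_forall fun x => ?_
    rw [Real.norm_eq_abs]
    calc |∑' k, g k x| ≤ ∑' k, |g k x| := by
          simpa [Real.norm_eq_abs] using norm_tsum_le_tsum_norm (f := fun k => g k x)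
            (by simpa [Real.norm_eq_abs] using (hsumm x).abs)
      _ ≤ ∑' k, A ‖φ‖ * |h k φ| := by
          apply Summable.tsum_le_tsum (fun k => hgb k x) _ ((hhabs φ).mul_left _)
          exact (hsumm x).abs
      _ = A ‖φ‖ * ∑' k, |h k φ| := tsum_mul_left
  · intro φseq φ hconv
    have hrle : -r ≤ (0:ℝ) := by linarith
    have hφ : Tendsto φseq atTop (𝓝 φ) := by
      rw [tendsto_iff_norm_sub_tendsto_zero]; exact hconv
    obtain ⟨K, hK⟩ : ∃ K, ∀ n, ‖φseq n - φ‖ ≤ K := by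
      obtain ⟨K, hK⟩ := hconv.bddAbove_range
      exact ⟨K, fun n => hK ⟨n, rfl⟩⟩
    have hK0 : 0 ≤ K := (norm_nonneg _).trans (hK 0)
    set R : ℝ := K + ‖φ‖ with hRdef
    have hR0 : 0 ≤ R := by positivity
    have hφn : ∀ n, ‖φseq n‖ ≤ R := fun n => by
      have h1 : ‖φseq n‖ ≤ ‖φseq n - φ‖ + ‖φ‖ := by
        simpa using norm_add_le (φseq n - φ) φ
      have := hK n; simp only [hRdef]; linarith
    have hφR : ‖φ‖ ≤ R := by simp only [hRdef]; linarith
    set B : Set (C(Set.Icc (-r) (0:ℝ), Lp ℝ 2 (volume.restrict Ω))) :=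
      Metric.closedBall 0 R with hBdef
    have hBbdd : Bornology.IsBounded B := Metric.isBounded_closedBall
    have hφnB : ∀ n, φseq n ∈ B := fun n => by
      simp only [hBdef, Metric.mem_closedBall, dist_zero_right]; exact hφn n
    have hφB : φ ∈ B := by
      simp only [hBdef, Metric.mem_closedBall, dist_zero_right]; exact hφR
    set u : ℕ → ℕ → Lp ℝ 2 (volume.restrict Ω) :=
      fun n k => (φseq n) (Set.projIcc (-r) 0 hrle (-(η k (φseq n)))) with hudef
    set v : ℕ → Lp ℝ 2 (volume.restrict Ω) :=
      fun k => φ (Set.projIcc (-r) 0 hrle (-(η k φ))) with hvdef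
    have hub : ∀ n k, ‖u n k‖ ≤ R := fun n k => ((φseq n).norm_coe_le_norm _).trans (hφn n)
    have hvb : ∀ k, ‖v k‖ ≤ R := fun k => (φ.norm_coe_le_norm _).trans hφR
    set AR : ℝ := A R with hARdef
    have hAR : 0 ≤ AR := hA0 _ hR0
    have haI : ∀ w : Lp ℝ 2 (volume.restrict Ω), ‖w‖ ≤ R → ∀ x,
        |∫ y, b (w y) * f (x - y) ∂(volume.restrict Ω)| ≤ AR := fun w hw x =>
      (conv_bound hf hMf hb hbgrowth hC₁ hC₂ hMf0 w x).trans (hAmono _ _ hw)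
    have hab : ∀ n k x, |(∫ y, b ((u n k) y) * f (x - y) ∂(volume.restrict Ω)) * h k (φseq n)|
        ≤ AR * |h k (φseq n)| := fun n k x => by
      rw [abs_mul]
      exact mul_le_mul_of_nonneg_right (haI _ (hub n k) x) (abs_nonneg _)
    have hcb : ∀ k x, |(∫ y, b ((v k) y) * f (x - y) ∂(volume.restrict Ω)) * h k φ|
        ≤ AR * |h k φ| := fun k x => by
      rw [abs_mul]
      exact mul_le_mul_of_nonneg_right (haI _ (hvb k) x) (abs_nonneg _)
    have hsa : ∀ n x, Summable (fun k =>
        (∫ y, b ((u n k) y) * f (x - y) ∂(volume.restrict Ω)) * h k (φseq n)) := fun n x =>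
      Summable.of_norm_bounded ((hhabs _).mul_left AR) (fun k => hab n k x)
    have hsc : ∀ x, Summable (fun k =>
        (∫ y, b ((v k) y) * f (x - y) ∂(volume.restrict Ω)) * h k φ) := fun x =>
      Summable.of_norm_bounded ((hhabs _).mul_left AR) (fun k => hcb k x)
    have key : ∀ ε > (0:ℝ), ∃ N : ℕ, ∀ n ≥ N, ∀ x,
        |(∑' k : ℕ, (∫ y, b ((u n k) y) * f (x - y) ∂(volume.restrict Ω)) * h k (φseq n)) -
         (∑' k : ℕ, (∫ y, b ((v k) y) * f (x - y) ∂(volume.restrict Ω)) * h k φ)| ≤ ε := by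
      intro ε hε
      have hε1 : (0:ℝ) < ε / (4 * (AR + 1)) := by positivity
      obtain ⟨N₁, hN₁⟩ := hhunif B hBbdd _ hε1
      set d : ℕ → ℕ → ℝ := fun n k =>
        Mf * Lb * (sqm * ‖u n k - v k‖) * |h k (φseq n)| + AR * |h k (φseq n) - h k φ|
        with hddef
      have hdk : ∀ k n x,
          |(∫ y, b ((u n k) y) * f (x - y) ∂(volume.restrict Ω)) * h k (φseq n) -
           (∫ y, b ((v k) y) * f (x - y) ∂(volume.restrict Ω)) * h k φ| ≤ d n k := by
        intro k n x
        set I1 := ∫ y, b ((u n k) y) * f (x - y) ∂(volume.restrict Ω) with hI1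
        set I2 := ∫ y, b ((v k) y) * f (x - y) ∂(volume.restrict Ω) with hI2
        have e1 : I1 * h k (φseq n) - I2 * h k φ =
            (I1 - I2) * h k (φseq n) + I2 * (h k (φseq n) - h k φ) := by ring
        rw [e1]
        have h2 : |I1 - I2| ≤ Mf * Lb * (sqm * ‖u n k - v k‖) :=
          conv_diff hf hMf hb hbgrowth hLb hblip hMf0 (u n k) (v k) x
        calc |(I1 - I2) * h k (φseq n) + I2 * (h k (φseq n) - h k φ)|
            ≤ |(I1 - I2) * h k (φseq n)| + |I2 * (h k (φseq n) - h k φ)| := abs_add_le _ _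
          _ = |I1 - I2| * |h k (φseq n)| + |I2| * |h k (φseq n) - h k φ| := by
              rw [abs_mul, abs_mul]
          _ ≤ Mf * Lb * (sqm * ‖u n k - v k‖) * |h k (φseq n)| + AR * |h k (φseq n) - h k φ| := by
              have h3 := haI _ (hvb k) x
              have h4 : |I2| ≤ AR := h3
              gcongr
          _ = d n k := rfl
      have hd0 : ∀ k, Tendsto (fun n => d n k) atTop (𝓝 0) := by
        intro k
        have hθ : Tendsto (fun n => Set.projIcc (-r) 0 hrle (-(η k (φseq n)))) atTop
            (𝓝 (Set.projIcc (-r) 0 hrle (-(η k φ)))) := by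
          apply (continuous_projIcc.tendsto _).comp
          exact (((hηcont k).tendsto φ).comp hφ).neg
        have hφθ : Tendsto (fun n => φ (Set.projIcc (-r) 0 hrle (-(η k (φseq n))))) atTop
            (𝓝 (v k)) := (φ.continuous.tendsto _).comp hθ
        have hT1 : Tendsto (fun n => ‖u n k - v k‖) atTop (𝓝 0) := by
          apply squeeze_zero (fun n => norm_nonneg _)
            (g := fun n => ‖φseq n - φ‖ + ‖φ (Set.projIcc (-r) 0 hrle (-(η k (φseq n)))) - v k‖)
          · intro n
            have e2 : u n k - v k =
                ((φseq n - φ) (Set.projIcc (-r) 0 hrle (-(η k (φseq n))))) +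
                (φ (Set.projIcc (-r) 0 hrle (-(η k (φseq n)))) - v k) := by
              simp only [hudef, ContinuousMap.sub_apply]
              abel
            rw [e2]
            refine (norm_add_le _ _).trans ?_
            gcongr
            exact (φseq n - φ).norm_coe_le_norm _
          · have h6 : Tendsto (fun n =>
                ‖φ (Set.projIcc (-r) 0 hrle (-(η k (φseq n)))) - v k‖) atTop (𝓝 0) :=
              tendsto_iff_norm_sub_tendsto_zero.mp hφθ
            simpa using hconv.add h6
        have hhk : Tendsto (fun n => h k (φseq n)) atTop (𝓝 (h k φ)) :=
          ((hhcont k).tendsto φ).comp hφ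
        have hT : Tendsto (fun n => d n k) atTop
            (𝓝 (Mf * Lb * (sqm * 0) * |h k φ| + AR * |h k φ - h k φ|)) := by
          apply Tendsto.add
          · exact (tendsto_const_nhds.mul (tendsto_const_nhds.mul hT1)).mul hhk.abs
          · exact tendsto_const_nhds.mul (hhk.sub tendsto_const_nhds).abs
        simpa using hT
      exact key_abstract
        (fun n k x => (∫ y, b ((u n k) y) * f (x - y) ∂(volume.restrict Ω)) * h k (φseq n))
        (fun k x => (∫ y, b ((v k) y) * f (x - y) ∂(volume.restrict Ω)) * h k φ)
        (fun n k => h k (φseq n)) (fun k => h k φ) AR hAR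
        (fun n k x => hab n k x) (fun k x => hcb k x)
        (fun n => hhabs _) (hhabs φ) d (fun k n x => hdk k n x) hd0 N₁ ε hε
        (fun n => le_of_lt (hN₁ (φseq n) (hφnB n) N₁ le_rfl))
        (le_of_lt (hN₁ φ hφB N₁ le_rfl))
    rw [ENNReal.tendsto_atTop_zero]
    intro E hE
    set Kc : ENNReal := (volume.restrict Ω) Set.univ ^ ((ENNReal.toReal 2))⁻¹ with hKc
    have hKfin : Kc ≠ ⊤ :=
      ENNReal.rpow_ne_top_of_nonneg (by norm_num) (measure_ne_top _ _)
    obtain ⟨δ, hδ0, hδE⟩ : ∃ δ : ℝ, 0 < δ ∧ Kc * ENNReal.ofReal δ ≤ E := by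
      by_cases hEtop : E = ⊤
      · exact ⟨1, one_pos, by rw [hEtop]; exact le_top⟩
      · have hE0 : 0 < E.toReal := ENNReal.toReal_pos (ne_of_gt hE) hEtop
        have hpos : (0:ℝ) < Kc.toReal + 1 := by positivity
        refine ⟨E.toReal / (Kc.toReal + 1), by positivity, ?_⟩
        have h7 : Kc.toReal * (E.toReal / (Kc.toReal + 1)) ≤ E.toReal := by
          rw [mul_comm, div_mul_eq_mul_div, div_le_iff₀ hpos]
          nlinarith [ENNReal.toReal_nonneg (a := Kc)]
        calc Kc * ENNReal.ofReal (E.toReal / (Kc.toReal + 1))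
            = ENNReal.ofReal Kc.toReal * ENNReal.ofReal (E.toReal / (Kc.toReal + 1)) := by
              rw [ENNReal.ofReal_toReal hKfin]
          _ = ENNReal.ofReal (Kc.toReal * (E.toReal / (Kc.toReal + 1))) := by
              rw [ENNReal.ofReal_mul ENNReal.toReal_nonneg]
          _ ≤ ENNReal.ofReal E.toReal := ENNReal.ofReal_le_ofReal h7
          _ = E := ENNReal.ofReal_toReal hEtop
    obtain ⟨N, hN⟩ := key δ hδ0
    refine ⟨N, fun n hn => ?_⟩
    have hbd : ∀ᵐ x ∂(volume.restrict Ω), ‖(∑' k : ℕ,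
        (∫ y in Ω, b ((φseq n) (Set.projIcc (-r) 0 (by linarith) (-(η k (φseq n)))) y) *
          f (x - y)) * h k (φseq n)) -
        (∑' k : ℕ, (∫ y in Ω, b (φ (Set.projIcc (-r) 0 (by linarith) (-(η k φ))) y) *
          f (x - y)) * h k φ)‖ ≤ δ := by
      refine Filter.Eventually.of_forall fun x => ?_
      rw [Real.norm_eq_abs]
      exact hN n hn x
    calc eLpNorm _ 2 (volume.restrict Ω) ≤
        (volume.restrict Ω) Set.univ ^ ((ENNReal.toReal 2))⁻¹ * ENNReal.ofReal δ :=
          eLpNorm_le_of_ae_bound hbd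
      _ ≤ E := hδE
end

section
/- (Uniqueness in the general case of Theorem 2 on the ignoring interval.) Let X be a real Banach space, r > 0, T₀ > 0, C_X := C([−r,0]; X) with sup norm, and let (T(t))_{t≥0} be bounded linear operators on X with ‖T(t)‖ ≤ 1 and t ↦ T(t)x continuous for each x. Let F = F_c + F_d where F_c : C_X → X is Lipschitz with constant L and F_d : C_X → X is such that s ↦ F_d(u_s) is continuous for every u ∈ C([−r,T₀];X). Let δ > 0 and assume F_d has the property: for all v, w ∈ C([−r,T₀]; X) with v|_{[−r,0]} = w|_{[−r,0]}, one has F_d(v_t) = F_d(w_t) for every t ∈ [0, min(δ,T₀)). If u¹, u² ∈ C([−r,T₀]; X) are mild solutions with the same initial function φ, i.e. uⁱ|_{[−r,0]} = φ and uⁱ(t) = T(t)φ(0) + ∫₀ᵗ T(t−s) F(uⁱ_s) ds for t ∈ [0,T₀], then u¹(t) = u²(t) for all t ∈ [−r, min(δ,T₀)). -/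
open MeasureTheory Set Filter Topology

/-- The history segment `u_s ∈ C([−r,0];X)` of a continuous function
`u ∈ C([−r,T₀];X)` at time `s`: `u_s(θ) = u(s+θ)` (the argument `s+θ` is clamped to
`[−r,T₀]`, which leaves it unchanged whenever `s ∈ [0,T₀]` and `θ ∈ [−r,0]`). -/
noncomputable def seg {X : Type*} [TopologicalSpace X] {r T₀ : ℝ} (h : -r ≤ T₀)
    (u : C(Set.Icc (-r) T₀, X)) (s : ℝ) : C(Set.Icc (-r) (0:ℝ), X) :=
  ContinuousMap.mk (fun θ => u (Set.projIcc (-r) T₀ h (s + θ)))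
    (by
      apply u.continuous.comp
      exact continuous_projIcc.comp (continuous_const.add continuous_subtype_val))

lemma seg_cont {X : Type*} [TopologicalSpace X] {r T₀ : ℝ} (h : -r ≤ T₀)
    (u : C(Set.Icc (-r) T₀, X)) : Continuous (fun s => seg h u s) := by
  let F : C(ℝ × Set.Icc (-r) (0:ℝ), X) :=
    ⟨fun p => u (Set.projIcc (-r) T₀ h (p.1 + p.2)),
      u.continuous.comp (continuous_projIcc.comp
        (continuous_fst.add (continuous_subtype_val.comp continuous_snd)))⟩
  have he : (fun s => seg h u s) = fun s => (ContinuousMap.curry F) s := by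
    funext s; ext θ; rfl
  rw [he]
  exact (ContinuousMap.curry F).continuous

lemma Tapply_cont {X : Type*} [NormedAddCommGroup X] [NormedSpace ℝ X]
    (T : ℝ → X →L[ℝ] X)
    (hTnorm : ∀ t : ℝ, 0 ≤ t → ‖T t‖ ≤ 1)
    (hTcont : ∀ x : X, ContinuousOn (fun t => T t x) (Set.Ici (0:ℝ)))
    (ψ : ℝ → X) (τ : ℝ → ℝ) (S : Set ℝ)
    (hψ : ContinuousOn ψ S) (hτ : ContinuousOn τ S) (hτ0 : ∀ s ∈ S, 0 ≤ τ s) :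
    ContinuousOn (fun s => T (τ s) (ψ s)) S := by
  intro s₀ hs₀
  have h1 : ContinuousWithinAt (fun s => T (τ s) (ψ s₀)) S s₀ :=
    ((hTcont (ψ s₀)) (τ s₀) (hτ0 s₀ hs₀)).comp (hτ s₀ hs₀) (fun s hs => hτ0 s hs)
  have h2 : Tendsto (fun s => T (τ s) (ψ s - ψ s₀)) (𝓝[S] s₀) (𝓝 0) := by
    apply squeeze_zero_norm' (a := fun s => ‖ψ s - ψ s₀‖)
    · filter_upwards [self_mem_nhdsWithin] with s hs
      calc ‖T (τ s) (ψ s - ψ s₀)‖ ≤ ‖T (τ s)‖ * ‖ψ s - ψ s₀‖ := (T (τ s)).le_opNorm _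
        _ ≤ 1 * ‖ψ s - ψ s₀‖ :=
          mul_le_mul_of_nonneg_right (hTnorm _ (hτ0 s hs)) (norm_nonneg _)
        _ = ‖ψ s - ψ s₀‖ := one_mul _
    · have h3 : Tendsto (fun s => ψ s - ψ s₀) (𝓝[S] s₀) (𝓝 (ψ s₀ - ψ s₀)) :=
        (hψ s₀ hs₀).sub tendsto_const_nhds
      rw [sub_self] at h3
      simpa using h3.norm
  have h2' : ContinuousWithinAt (fun s => T (τ s) (ψ s - ψ s₀)) S s₀ := by
    unfold ContinuousWithinAt
    simpa using h2
  have := h2'.add h1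
  refine this.congr (fun s _ => ?_) ?_ <;> simp [map_sub]

/-- uniqueness in the general case of Theorem 2 on the ignoring
interval: `X` a Banach space, `(T(t))_{t≥0}` strongly continuous linear contractions,
`F = F_c + F_d` with `F_c` Lipschitz (constant `L`) and `F_d` such that `s ↦ F_d(u_s)`
is continuous along every continuous `u`, and `F_d` has the ignoring property on
`[0, min(δ,T₀))`: solutions with the same initial history give the same value of
`F_d` there. Then two mild solutions with the same initial function `φ` coincide on
`[−r, min(δ,T₀))`. -/
theorem stmt15
    {X : Type*} [NormedAddCommGroup X] [NormedSpace ℝ X] [CompleteSpace X]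
    (r T₀ : ℝ) (hr : 0 < r) (hT₀ : 0 < T₀) (hrT₀ : -r ≤ T₀)
    (T : ℝ → X →L[ℝ] X)
    (hTnorm : ∀ t : ℝ, 0 ≤ t → ‖T t‖ ≤ 1)
    (hTcont : ∀ x : X, ContinuousOn (fun t => T t x) (Set.Ici (0:ℝ)))
    (Fc Fd : C(Set.Icc (-r) (0:ℝ), X) → X)
    (L : ℝ) (hL : 0 ≤ L)
    (hFclip : ∀ p q : C(Set.Icc (-r) (0:ℝ), X), ‖Fc p - Fc q‖ ≤ L * ‖p - q‖)
    (hFdcont : ∀ u : C(Set.Icc (-r) T₀, X),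
      ContinuousOn (fun s => Fd (seg hrT₀ u s)) (Set.Icc (0:ℝ) T₀))
    (δ : ℝ) (hδ : 0 < δ)
    (hFdign : ∀ v w : C(Set.Icc (-r) T₀, X), seg hrT₀ v 0 = seg hrT₀ w 0 →
      ∀ t : ℝ, 0 ≤ t → t < min δ T₀ → Fd (seg hrT₀ v t) = Fd (seg hrT₀ w t))
    (u₁ u₂ : C(Set.Icc (-r) T₀, X))
    (φ : C(Set.Icc (-r) (0:ℝ), X))
    (hinit₁ : seg hrT₀ u₁ 0 = φ)
    (hinit₂ : seg hrT₀ u₂ 0 = φ)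
    (hmild₁ : ∀ t ∈ Set.Icc (0:ℝ) T₀,
      u₁ (Set.projIcc (-r) T₀ hrT₀ t) =
        T t (φ ⟨0, by constructor <;> linarith⟩) +
          ∫ s in (0:ℝ)..t, T (t - s) (Fc (seg hrT₀ u₁ s) + Fd (seg hrT₀ u₁ s)))
    (hmild₂ : ∀ t ∈ Set.Icc (0:ℝ) T₀,
      u₂ (Set.projIcc (-r) T₀ hrT₀ t) =
        T t (φ ⟨0, by constructor <;> linarith⟩) +
          ∫ s in (0:ℝ)..t, T (t - s) (Fc (seg hrT₀ u₂ s) + Fd (seg hrT₀ u₂ s))) :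
    ∀ t ∈ Set.Ico (-r) (min δ T₀),
      u₁ (Set.projIcc (-r) T₀ hrT₀ t) = u₂ (Set.projIcc (-r) T₀ hrT₀ t) := by
  intro t ht
  obtain ⟨htr, htmin⟩ := ht
  have hseg0 : seg hrT₀ u₁ 0 = seg hrT₀ u₂ 0 := hinit₁.trans hinit₂.symm
  have hr0 : (-r : ℝ) ≤ 0 := by linarith
  -- equality at nonpositive times
  have hw0 : ∀ s : ℝ, s ≤ 0 →
      u₁ (Set.projIcc (-r) T₀ hrT₀ s) = u₂ (Set.projIcc (-r) T₀ hrT₀ s) := by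
    intro s hs
    have hkey : ∀ θ : Set.Icc (-r) (0:ℝ),
        u₁ (Set.projIcc (-r) T₀ hrT₀ (θ:ℝ)) = u₂ (Set.projIcc (-r) T₀ hrT₀ (θ:ℝ)) := by
      intro θ
      have h1 := ContinuousMap.congr_fun hseg0 θ
      simpa [seg, zero_add] using h1
    have hproj : Set.projIcc (-r) T₀ hrT₀ s
        = Set.projIcc (-r) T₀ hrT₀ ((Set.projIcc (-r) 0 hr0 s : ℝ)) := by
      apply Subtype.ext
      rw [Set.coe_projIcc, Set.coe_projIcc, Set.coe_projIcc]
      rw [min_eq_right hs, min_eq_right (hs.trans hT₀.le),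
        min_eq_right (le_trans (max_le hr0 hs) hT₀.le), ← max_assoc, max_self]
    rw [hproj]
    exact hkey _
  rcases le_or_gt t 0 with ht0 | ht0
  · exact hw0 t ht0
  have htδ : t < δ := lt_of_lt_of_le htmin (min_le_left _ _)
  have htT : t < T₀ := lt_of_lt_of_le htmin (min_le_right _ _)
  set w : ℝ → X := fun s =>
    u₁ (Set.projIcc (-r) T₀ hrT₀ s) - u₂ (Set.projIcc (-r) T₀ hrT₀ s) with hw_def
  set g : ℝ → ℝ := fun s => ‖seg hrT₀ u₁ s - seg hrT₀ u₂ s‖ with hg_def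
  have hg_cont : Continuous g := ((seg_cont hrT₀ u₁).sub (seg_cont hrT₀ u₂)).norm
  have hg_nonneg : ∀ s, 0 ≤ g s := fun s => norm_nonneg _
  set f : ℝ → ℝ := fun σ => ∫ s in (0:ℝ)..σ, g s with hf_def
  have hf_nonneg : ∀ σ, 0 ≤ σ → 0 ≤ f σ := fun σ hσ =>
    intervalIntegral.integral_nonneg hσ (fun s _ => hg_nonneg s)
  have hf_mono : ∀ a b : ℝ, a ≤ b → f a ≤ f b := by
    intro a b hab
    have h1 : f a + ∫ s in a..b, g s = f b :=
      intervalIntegral.integral_add_adjacent_intervals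
        (hg_cont.intervalIntegrable _ _) (hg_cont.intervalIntegrable _ _)
    have h2 : 0 ≤ ∫ s in a..b, g s :=
      intervalIntegral.integral_nonneg hab (fun s _ => hg_nonneg s)
    linarith
  have hFcCont : Continuous Fc := by
    have hlip : LipschitzWith ⟨L, hL⟩ Fc := by
      apply LipschitzWith.of_dist_le_mul
      intro p q
      rw [dist_eq_norm, dist_eq_norm]
      exact hFclip p q
    exact hlip.continuous
  have hHcont : ∀ u : C(Set.Icc (-r) T₀, X), ContinuousOn
      (fun s => Fc (seg hrT₀ u s) + Fd (seg hrT₀ u s)) (Set.Icc (0:ℝ) T₀) := fun u =>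
    ((hFcCont.comp (seg_cont hrT₀ u)).continuousOn.add (hFdcont u))
  -- main integral estimate
  have hw_bound : ∀ σ ∈ Set.Icc (0:ℝ) t, ‖w σ‖ ≤ L * f σ := by
    intro σ hσmem
    obtain ⟨hσ0, hσt⟩ := hσmem
    have hσT : σ ≤ T₀ := hσt.trans htT.le
    have hIcc : Set.Icc (0:ℝ) σ ⊆ Set.Icc (0:ℝ) T₀ := Set.Icc_subset_Icc le_rfl hσT
    have hInt : ∀ u : C(Set.Icc (-r) T₀, X), IntervalIntegrable
        (fun s => T (σ - s) (Fc (seg hrT₀ u s) + Fd (seg hrT₀ u s))) volume 0 σ := by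
      intro u
      apply ContinuousOn.intervalIntegrable_of_Icc hσ0
      exact Tapply_cont T hTnorm hTcont _ _ _ ((hHcont u).mono hIcc)
        (continuous_const.sub continuous_id).continuousOn
        (fun s hs => by simpa using hs.2)
    have heqw : w σ = ∫ s in (0:ℝ)..σ,
        (T (σ - s) (Fc (seg hrT₀ u₁ s) + Fd (seg hrT₀ u₁ s))
          - T (σ - s) (Fc (seg hrT₀ u₂ s) + Fd (seg hrT₀ u₂ s))) := by
      show u₁ (Set.projIcc (-r) T₀ hrT₀ σ) - u₂ (Set.projIcc (-r) T₀ hrT₀ σ) = _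
      rw [hmild₁ σ ⟨hσ0, hσT⟩, hmild₂ σ ⟨hσ0, hσT⟩, add_sub_add_left_eq_sub,
        intervalIntegral.integral_sub (hInt u₁) (hInt u₂)]
    rw [heqw]
    have habs : |∫ s in (0:ℝ)..σ, L * g s| = L * f σ := by
      rw [intervalIntegral.integral_const_mul,
        abs_of_nonneg (mul_nonneg hL (hf_nonneg σ hσ0))]
    rw [← habs]
    apply intervalIntegral.norm_integral_le_abs_of_norm_le
    · filter_upwards [ae_restrict_mem measurableSet_uIoc] with s hs
      rw [Set.uIoc_of_le hσ0] at hs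
      have hs0 : (0:ℝ) ≤ s := hs.1.le
      have hsmin : s < min δ T₀ := lt_of_le_of_lt (le_trans hs.2 hσt) htmin
      have hFd := hFdign u₁ u₂ hseg0 s hs0 hsmin
      rw [← map_sub]
      have hx : (Fc (seg hrT₀ u₁ s) + Fd (seg hrT₀ u₁ s))
          - (Fc (seg hrT₀ u₂ s) + Fd (seg hrT₀ u₂ s))
          = Fc (seg hrT₀ u₁ s) - Fc (seg hrT₀ u₂ s) := by
        rw [hFd]; abel
      rw [hx]
      calc ‖T (σ - s) (Fc (seg hrT₀ u₁ s) - Fc (seg hrT₀ u₂ s))‖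
          ≤ ‖T (σ - s)‖ * ‖Fc (seg hrT₀ u₁ s) - Fc (seg hrT₀ u₂ s)‖ :=
            (T (σ - s)).le_opNorm _
        _ ≤ 1 * ‖Fc (seg hrT₀ u₁ s) - Fc (seg hrT₀ u₂ s)‖ :=
            mul_le_mul_of_nonneg_right (hTnorm _ (by linarith [hs.2])) (norm_nonneg _)
        _ = ‖Fc (seg hrT₀ u₁ s) - Fc (seg hrT₀ u₂ s)‖ := one_mul _
        _ ≤ L * g s := hFclip _ _
    · exact (continuous_const.mul hg_cont).intervalIntegrable _ _
  -- sup estimate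
  have hg_bound : ∀ σ ∈ Set.Icc (0:ℝ) t, g σ ≤ L * f σ := by
    intro σ hσmem
    obtain ⟨hσ0, hσt⟩ := hσmem
    show ‖seg hrT₀ u₁ σ - seg hrT₀ u₂ σ‖ ≤ L * f σ
    rw [ContinuousMap.norm_le _ (mul_nonneg hL (hf_nonneg σ hσ0))]
    intro θ
    have hθ2 : (θ:ℝ) ≤ 0 := θ.2.2
    rw [ContinuousMap.sub_apply]
    show ‖w (σ + θ)‖ ≤ L * f σ
    rcases le_or_gt (σ + (θ:ℝ)) 0 with hc | hc
    · have hz : w (σ + θ) = 0 := sub_eq_zero.mpr (hw0 _ hc)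
      rw [hz, norm_zero]
      exact mul_nonneg hL (hf_nonneg σ hσ0)
    · have h1 : ‖w (σ + θ)‖ ≤ L * f (σ + θ) :=
        hw_bound _ ⟨hc.le, by linarith⟩
      exact h1.trans (mul_le_mul_of_nonneg_left (hf_mono _ _ (by linarith)) hL)
  -- Gronwall
  have hderiv : ∀ x : ℝ, HasDerivAt f (g x) x := fun x =>
    intervalIntegral.integral_hasDerivAt_right (hg_cont.intervalIntegrable _ _)
      hg_cont.aestronglyMeasurable.stronglyMeasurableAtFilter hg_cont.continuousAt
  have hfz : ∀ x ∈ Set.Icc (0:ℝ) t, ‖f x‖ ≤ gronwallBound 0 L 0 (x - 0) := by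
    apply norm_le_gronwallBound_of_norm_deriv_right_le
      (fun x _ => (hderiv x).continuousAt.continuousWithinAt)
      (fun x _ => (hderiv x).hasDerivWithinAt)
    · simp [hf_def]
    · intro x hx
      rw [Real.norm_of_nonneg (hg_nonneg x), Real.norm_of_nonneg (hf_nonneg x hx.1),
        add_zero]
      exact hg_bound x ⟨hx.1, hx.2.le⟩
  have hft : f t = 0 := by
    have h1 := hfz t ⟨ht0.le, le_rfl⟩
    rw [gronwallBound_ε0_δ0] at h1
    exact norm_le_zero_iff.mp h1
  have hgt : g t = 0 :=
    le_antisymm (by simpa [hft] using hg_bound t ⟨ht0.le, le_rfl⟩) (hg_nonneg t)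
  have hsegeq : seg hrT₀ u₁ t = seg hrT₀ u₂ t := sub_eq_zero.mp (norm_eq_zero.mp hgt)
  have hfin := ContinuousMap.congr_fun hsegeq ⟨0, by constructor <;> linarith⟩
  simpa [seg] using hfin
end
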